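/- Let n ≥ 2, let w_i := 2^{−i}/(1 − 2^{−n}) for 1 ≤ i ≤ n, and let π be the probability distribution on permutations of {1,…,n} given by π(x) = z^{−1} ∏_{i=1}^n w_{x_i}^{n−i}, where z is the normalizing constant. Then the π-probability of the event that label n−1 appears in an earlier position than label n is at least 1/2, and it is strictly greater than 1/2 for all n ≥ 3. -/

import Mathlib

open Finset

/-- The Hendricks stationary weight `∏_{i=1}^n w_{x_i}^{n-i}` (0-based exponent
`n - 1 - i`), where `x i` is the entry in position `i`. -/
noncomputable def wProd (n : ℕ) (w : Fin n → ℝ) (x : Equiv.Perm (Fin n)) : ℝ :=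
  ∏ i : Fin n, w (x i) ^ (n - 1 - (i : ℕ))

/-- The geometric weights `w_i = 2^{-i}/(1 - 2^{-n})` (labels `1, ..., n`; 0-based label
`i` corresponds to `2^{-(i+1)}`). -/
noncomputable def geomW (n : ℕ) (i : Fin n) : ℝ :=
  ((2 : ℝ) ^ ((i : ℕ) + 1))⁻¹ / (1 - ((2 : ℝ) ^ n)⁻¹)


lemma wProd_pos {n : ℕ} {w : Fin n → ℝ} (hw : ∀ i, 0 < w i) (x : Equiv.Perm (Fin n)) :
    0 < wProd n w x :=
  Finset.prod_pos fun i _ => pow_pos (hw _) _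

lemma wProd_eq {n : ℕ} (w : Fin n → ℝ) (x : Equiv.Perm (Fin n)) :
    wProd n w x = ∏ j : Fin n, w j ^ (n - 1 - ((x.symm j : Fin n) : ℕ)) := by
  rw [wProd, ← Equiv.prod_comp x (fun j => w j ^ (n - 1 - ((x.symm j : Fin n) : ℕ)))]
  simp

lemma wProd_swap_lt {n : ℕ} {w : Fin n → ℝ} (hw : ∀ i, 0 < w i) {a b : Fin n}
    (hab : a ≠ b) (hwab : w b < w a) {x : Equiv.Perm (Fin n)}
    (hx : (x.symm a : ℕ) < (x.symm b : ℕ)) :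
    wProd n w (x.trans (Equiv.swap a b)) < wProd n w x := by
  rw [wProd_eq, wProd_eq]
  have hsymm : ∀ j, (x.trans (Equiv.swap a b)).symm j = x.symm (Equiv.swap a b j) := by
    intro j; simp
  simp only [hsymm]
  rw [← Finset.prod_sdiff (Finset.subset_univ {a, b}),
      ← Finset.prod_sdiff (Finset.subset_univ {a, b})]
  have hP : ∏ j ∈ univ \ {a, b}, w j ^ (n - 1 - ((x.symm (Equiv.swap a b j) : Fin n) : ℕ))
      = ∏ j ∈ univ \ {a, b}, w j ^ (n - 1 - ((x.symm j : Fin n) : ℕ)) := by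
    apply Finset.prod_congr rfl
    intro j hj
    simp only [Finset.mem_sdiff, Finset.mem_insert, Finset.mem_singleton] at hj
    rw [Equiv.swap_apply_of_ne_of_ne (fun h => hj.2 (Or.inl h)) (fun h => hj.2 (Or.inr h))]
  rw [hP]
  have hPpos : 0 < ∏ j ∈ univ \ {a, b}, w j ^ (n - 1 - ((x.symm j : Fin n) : ℕ)) :=
    Finset.prod_pos fun i _ => pow_pos (hw _) _
  apply mul_lt_mul_of_pos_left _ hPpos
  rw [Finset.prod_pair hab, Finset.prod_pair hab, Equiv.swap_apply_left, Equiv.swap_apply_right]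
  set p : ℕ := (x.symm a : ℕ)
  set q : ℕ := (x.symm b : ℕ)
  have hq : q < n := (x.symm b).2
  -- exponents
  set u : ℕ := n - 1 - q
  set v : ℕ := n - 1 - p
  have huv : u < v := by omega
  obtain ⟨d, hdv⟩ : ∃ d, v = u + d := ⟨v - u, by omega⟩
  have hd : 0 < d := by omega
  have hlt : w b ^ d < w a ^ d := pow_lt_pow_left₀ hwab (hw b).le (by omega)
  have hpos : 0 < w a ^ u * w b ^ u := mul_pos (pow_pos (hw a) u) (pow_pos (hw b) u)
  calc w a ^ u * w b ^ v = (w a ^ u * w b ^ u) * w b ^ d := by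
        rw [hdv, pow_add]; ring
    _ < (w a ^ u * w b ^ u) * w a ^ d := mul_lt_mul_of_pos_left hlt hpos
    _ = w a ^ v * w b ^ u := by rw [hdv, pow_add]; ring

lemma main_lemma {n : ℕ} (w : Fin n → ℝ) (hw : ∀ i, 0 < w i) (a b : Fin n)
    (hab : a < b) (hwab : w b < w a) :
    1 / 2 <
      (∑ x ∈ Finset.univ.filter (fun x : Equiv.Perm (Fin n) => x.symm a < x.symm b),
        wProd n w x) / (∑ x : Equiv.Perm (Fin n), wProd n w x) := by
  have hne : a ≠ b := ne_of_lt hab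
  set E := Finset.univ.filter (fun x : Equiv.Perm (Fin n) => x.symm a < x.symm b) with hE
  set C := Finset.univ.filter (fun x : Equiv.Perm (Fin n) => ¬ x.symm a < x.symm b) with hC
  have hsplit : (∑ x : Equiv.Perm (Fin n), wProd n w x)
      = (∑ x ∈ E, wProd n w x) + (∑ x ∈ C, wProd n w x) :=
    (Finset.sum_filter_add_sum_filter_not _ _ _).symm
  -- C sums equal sum over E of swapped
  have hCE : (∑ x ∈ C, wProd n w x) = ∑ x ∈ E, wProd n w (x.trans (Equiv.swap a b)) := by
    apply Finset.sum_nbij' (i := fun x => x.trans (Equiv.swap a b))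
      (j := fun x => x.trans (Equiv.swap a b))
    · intro x hx
      simp only [hC, Finset.mem_filter, Finset.mem_univ, true_and, not_lt] at hx
      simp only [hE, Finset.mem_filter, Finset.mem_univ, true_and]
      have h1 : (x.trans (Equiv.swap a b)).symm a = x.symm b := by simp
      have h2 : (x.trans (Equiv.swap a b)).symm b = x.symm a := by simp
      rw [h1, h2]
      exact lt_of_le_of_ne hx (fun h => hne ((x.symm.injective h).symm))
    · intro x hx
      simp only [hE, Finset.mem_filter, Finset.mem_univ, true_and] at hx
      simp only [hC, Finset.mem_filter, Finset.mem_univ, true_and, not_lt]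
      have h1 : (x.trans (Equiv.swap a b)).symm a = x.symm b := by simp
      have h2 : (x.trans (Equiv.swap a b)).symm b = x.symm a := by simp
      rw [h1, h2]
      exact le_of_lt hx
    · intro x _; ext i; simp
    · intro x _; ext i; simp
    · intro x _
      congr 1
      ext i; simp
  have hEne : E.Nonempty := ⟨1, by simp [hE, hab]; exact hab⟩
  have hlt : (∑ x ∈ C, wProd n w x) < ∑ x ∈ E, wProd n w x := by
    rw [hCE]
    apply Finset.sum_lt_sum_of_nonempty hEne
    intro x hx
    simp only [hE, Finset.mem_filter, Finset.mem_univ, true_and] at hx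
    exact wProd_swap_lt hw hne hwab hx
  have hEpos : 0 < ∑ x ∈ E, wProd n w x :=
    Finset.sum_pos (fun x _ => wProd_pos hw x) hEne
  have hCpos : 0 ≤ ∑ x ∈ C, wProd n w x :=
    Finset.sum_nonneg fun x _ => (wProd_pos hw x).le
  have hSpos : 0 < ∑ x : Equiv.Perm (Fin n), wProd n w x := by
    rw [hsplit]; linarith
  rw [lt_div_iff₀ hSpos, hsplit]
  linarith

/-- for the geometric weights, under the Hendricks distribution
`π(x) ∝ ∏_i w_{x_i}^{n-i}`, the probability that label `n-1` appears in an earlier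
position than label `n` is at least `1/2`, and strictly greater than `1/2` if `n ≥ 3`. -/
theorem geometric_weights_order (n : ℕ) (hn : 2 ≤ n) :
    1 / 2 ≤
      (∑ x ∈ Finset.univ.filter (fun x : Equiv.Perm (Fin n) =>
          x.symm ⟨n - 2, by omega⟩ < x.symm ⟨n - 1, by omega⟩), wProd n (geomW n) x) /
        (∑ x : Equiv.Perm (Fin n), wProd n (geomW n) x) ∧
    (3 ≤ n →
      1 / 2 <
        (∑ x ∈ Finset.univ.filter (fun x : Equiv.Perm (Fin n) =>
            x.symm ⟨n - 2, by omega⟩ < x.symm ⟨n - 1, by omega⟩), wProd n (geomW n) x) /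
          (∑ x : Equiv.Perm (Fin n), wProd n (geomW n) x)) := by
  have hw : ∀ i : Fin n, 0 < geomW n i := by
    intro i
    have h1 : (0:ℝ) < 1 - ((2:ℝ)^n)⁻¹ := by
      have : ((2:ℝ)^n)⁻¹ < 1 := by
        rw [inv_lt_one_iff₀]
        right
        exact one_lt_pow₀ (by norm_num) (by omega)
      linarith
    have h2 : (0:ℝ) < ((2:ℝ) ^ ((i:ℕ)+1))⁻¹ := by positivity
    exact div_pos h2 h1
  have hwab : geomW n ⟨n - 1, by omega⟩ < geomW n ⟨n - 2, by omega⟩ := by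
    have h1 : (0:ℝ) < 1 - ((2:ℝ)^n)⁻¹ := by
      have : ((2:ℝ)^n)⁻¹ < 1 := by
        rw [inv_lt_one_iff₀]
        right
        exact one_lt_pow₀ (by norm_num) (by omega)
      linarith
    apply div_lt_div_of_pos_right _ h1
    apply inv_strictAnti₀ (by positivity)
    apply pow_lt_pow_right₀ (by norm_num)
    simp only [Fin.val_mk]; omega
  have key := main_lemma (geomW n) hw ⟨n - 2, by omega⟩ ⟨n - 1, by omega⟩
    (by simp [Fin.lt_def]; omega) hwab
  exact ⟨le_of_lt key, fun _ => key⟩
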